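/- For 1 ≤ q < p < ∞ and any weight w, ‖ℳ_q f‖_{L^p(w)} ≤ ((p/q)')^{1/q} ‖f‖_{L^p(ℳw)}, where ℳ_q f = (ℳ(|f|^q))^{1/q}. -/

import Mathlib

open MeasureTheory Set Filter Topology
open scoped ENNReal

namespace Stmt9Aux

variable {α : Type*} [MeasurableSpace α]

/-- Union bound over a finite nested family. -/
lemma nested_finset_bound (ν τ : Measure α) (c : ℝ≥0∞) (𝒞 : Set (Set α))
    (hm : ∀ Q ∈ 𝒞, MeasurableSet Q)
    (hn : ∀ Q ∈ 𝒞, ∀ Q' ∈ 𝒞, Disjoint Q Q' ∨ Q ⊆ Q' ∨ Q' ⊆ Q)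
    (hb : ∀ Q ∈ 𝒞, ν Q ≤ c * τ Q) :
    ∀ F : Finset (Set α), ↑F ⊆ 𝒞 → ν (⋃₀ ↑F) ≤ c * τ (⋃₀ ↑F) := by
  classical
  intro F
  induction F using Finset.strongInduction with
  | _ F ih =>
    intro hF
    rcases F.eq_empty_or_nonempty with rfl | hne
    · simp
    obtain ⟨Q, hQF, hQmax⟩ := F.exists_maximal hne
    have hQ𝒞 : Q ∈ 𝒞 := hF hQF
    set F' := F.filter (fun R => ¬ R ⊆ Q) with hF'def
    have hQnotF' : Q ∉ F' := by simp [hF'def]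
    have hF'ss : F' ⊂ F :=
      Finset.ssubset_iff_of_subset (Finset.filter_subset _ F) |>.2 ⟨Q, hQF, hQnotF'⟩
    have hF'𝒞 : ↑F' ⊆ 𝒞 := fun R hR => hF (Finset.filter_subset _ F (by exact_mod_cast hR))
    have hdisj : Disjoint Q (⋃₀ ↑F') := by
      rw [Set.disjoint_sUnion_right]
      intro R hR
      have hRmem : R ∈ F' := by exact_mod_cast hR
      have hRF : R ∈ F := Finset.filter_subset _ F hRmem
      have hRnsub : ¬ R ⊆ Q := (Finset.mem_filter.1 hRmem).2
      rcases hn Q hQ𝒞 R (hF hRF) with h | h | h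
      · exact h
      · rcases eq_or_ne Q R with rfl | hne'
        · exact absurd (le_refl Q) hRnsub
        · exact absurd (hQmax hRF h) hRnsub
      · exact absurd h hRnsub
    have hunion : ⋃₀ (↑F : Set (Set α)) = Q ∪ ⋃₀ ↑F' := by
      ext x
      constructor
      · rintro ⟨R, hR, hx⟩
        have hRF : R ∈ F := by exact_mod_cast hR
        by_cases h : R ⊆ Q
        · exact Or.inl (h hx)
        · exact Or.inr ⟨R, by exact_mod_cast Finset.mem_filter.2 ⟨hRF, h⟩, hx⟩
      · rintro (hx | ⟨R, hR, hx⟩)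
        · exact ⟨Q, by exact_mod_cast hQF, hx⟩
        · have hRmem : R ∈ F' := by exact_mod_cast hR
          exact ⟨R, by exact_mod_cast Finset.filter_subset _ F hRmem, hx⟩
    have hUm : MeasurableSet (⋃₀ (↑F' : Set (Set α))) :=
      MeasurableSet.sUnion F'.countable_toSet (fun R hR => hm R (hF'𝒞 hR))
    calc ν (⋃₀ ↑F) ≤ ν Q + ν (⋃₀ ↑F') := by rw [hunion]; exact measure_union_le _ _
      _ ≤ c * τ Q + c * τ (⋃₀ ↑F') := add_le_add (hb Q hQ𝒞) (ih F' hF'ss hF'𝒞)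
      _ = c * (τ Q + τ (⋃₀ ↑F')) := (mul_add _ _ _).symm
      _ = c * τ (⋃₀ ↑F) := by rw [hunion, measure_union hdisj hUm]

/-- Union bound over a countable nested family. -/
lemma nested_countable_bound (ν τ : Measure α) (c : ℝ≥0∞) (𝒞 : Set (Set α))
    (hc : 𝒞.Countable)
    (hm : ∀ Q ∈ 𝒞, MeasurableSet Q)
    (hn : ∀ Q ∈ 𝒞, ∀ Q' ∈ 𝒞, Disjoint Q Q' ∨ Q ⊆ Q' ∨ Q' ⊆ Q)
    (hb : ∀ Q ∈ 𝒞, ν Q ≤ c * τ Q) :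
    ν (⋃₀ 𝒞) ≤ c * τ Set.univ := by
  classical
  rcases 𝒞.eq_empty_or_nonempty with rfl | hne
  · simp
  obtain ⟨e, rfl⟩ := hc.exists_eq_range hne
  rw [Set.sUnion_range, measure_iUnion_eq_iSup_accumulate]
  refine iSup_le fun N => ?_
  have hacc : Set.accumulate e N = ⋃₀ ↑((Finset.range (N+1)).image e) := by
    ext x
    simp only [Set.mem_accumulate, Set.mem_sUnion, Finset.coe_image, Set.mem_image,
      Finset.mem_coe, Finset.mem_range, Nat.lt_succ_iff]
    constructor
    · rintro ⟨n, hn', hx⟩; exact ⟨e n, ⟨n, hn', rfl⟩, hx⟩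
    · rintro ⟨R, ⟨n, hn', rfl⟩, hx⟩; exact ⟨n, hn', hx⟩
  rw [hacc]
  refine le_trans (nested_finset_bound ν τ c _ hm hn hb _ ?_) ?_
  · intro R hR
    simp only [Finset.coe_image, Set.mem_image, Finset.mem_coe, Finset.mem_range] at hR
    obtain ⟨n, _, rfl⟩ := hR
    exact ⟨n, rfl⟩
  · exact mul_le_mul_right (measure_mono (Set.subset_univ _)) c


lemma tsum_int_shift (F : ℤ → ℝ≥0∞) (K : ℤ) (h0 : ∀ k, K < k → F k = 0) :
    ∑' k : ℤ, F k = ∑' j : ℕ, F (K - j) := by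
  refine (Function.Injective.tsum_eq (g := fun j : ℕ => K - (j : ℤ)) ?_ ?_).symm
  · intro a b hab
    simp only at hab
    omega
  · intro k hk
    rcases le_or_gt k K with h | h
    · refine ⟨(K - k).toNat, ?_⟩
      simp only
      omega
    · exact absurd (h0 k h) hk

lemma exists_int_level {δ A : ℝ} (hδ : 1 < δ) (hA : 0 < A) :
    ∃ K : ℤ, (∀ k : ℤ, δ ^ (k : ℝ) < A ↔ k ≤ K) ∧ A ≤ δ ^ ((K : ℝ) + 1) := by
  have hδ0 : (0:ℝ) < δ := lt_trans one_pos hδ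
  refine ⟨⌈Real.logb δ A⌉ - 1, fun k => ?_, ?_⟩
  · rw [← Real.lt_logb_iff_rpow_lt hδ hA]
    constructor
    · intro h
      have := Int.lt_ceil.2 h
      omega
    · intro h
      exact Int.lt_ceil.1 (by omega)
  · have h1 : Real.logb δ A ≤ (⌈Real.logb δ A⌉ : ℝ) := Int.le_ceil _
    have h2 : δ ^ Real.logb δ A = A := Real.rpow_logb hδ0 (ne_of_gt hδ) hA
    calc A = δ ^ Real.logb δ A := h2.symm
      _ ≤ δ ^ ((⌈Real.logb δ A⌉ : ℝ)) := by
          exact Real.rpow_le_rpow_left_iff hδ |>.2 h1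
      _ = δ ^ ((((⌈Real.logb δ A⌉ - 1 : ℤ)) : ℝ) + 1) := by push_cast; ring_nf

/-- Discrete layer-cake lower bound:  `a ^ R ≤ Σ_k (δ^R-1) δ^{kR} 1_{δ^k < a}`. -/
lemma pow_le_tsum_layer {δ R : ℝ} (hδ : 1 < δ) (hR : 1 < R) (a : ℝ≥0∞) :
    a ^ R ≤ ∑' k : ℤ, (if ENNReal.ofReal (δ ^ (k : ℝ)) < a
        then ENNReal.ofReal ((δ ^ R - 1) * δ ^ ((k : ℝ) * R)) else 0) := by
  have hδ0 : (0:ℝ) < δ := lt_trans one_pos hδ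
  have hR0 : (0:ℝ) < R := lt_trans one_pos hR
  have hδR : (1:ℝ) < δ ^ R := by
    calc (1:ℝ) = δ ^ (0:ℝ) := (Real.rpow_zero δ).symm
    _ < δ ^ R := Real.rpow_lt_rpow_left_iff hδ |>.2 hR0
  rcases eq_or_ne a 0 with rfl | ha0
  · simp [ENNReal.zero_rpow_of_pos hR0]
  rcases eq_or_ne a ⊤ with rfl | hatop
  · -- RHS is infinite
    rw [ENNReal.top_rpow_of_pos hR0, top_le_iff, eq_top_iff]
    have hle : ∑' j : ℕ, ENNReal.ofReal (δ ^ R - 1) ≤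
        ∑' k : ℤ, (if ENNReal.ofReal (δ ^ (k : ℝ)) < (⊤:ℝ≥0∞)
          then ENNReal.ofReal ((δ ^ R - 1) * δ ^ ((k : ℝ) * R)) else 0) := by
      refine le_trans (ENNReal.tsum_le_tsum (fun j : ℕ => ?_))
        (ENNReal.tsum_comp_le_tsum_of_injective
          (f := fun n : ℕ => (n : ℤ)) (fun a b h => by simpa using h) _)
      rw [if_pos ENNReal.ofReal_lt_top]
      refine ENNReal.ofReal_le_ofReal ?_
      have h1 : (1:ℝ) ≤ δ ^ ((((j:ℕ):ℤ):ℝ) * R) := by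
        rw [show (1:ℝ) = δ ^ (0:ℝ) from (Real.rpow_zero δ).symm]
        exact Real.rpow_le_rpow_left_iff hδ |>.2 (by positivity)
      nlinarith [sub_pos.2 hδR]
    refine le_trans ?_ hle
    rw [ENNReal.tsum_const_eq_top_of_ne_zero (by
      simp only [ne_eq, ENNReal.ofReal_eq_zero, not_le]; linarith)]
  -- main case : 0 < a < ⊤
  set A : ℝ := a.toReal with hAdef
  have hA : 0 < A := ENNReal.toReal_pos ha0 hatop
  obtain ⟨K, hKiff, hKub⟩ := exists_int_level hδ hA
  have hcond : ∀ k : ℤ, (ENNReal.ofReal (δ ^ (k : ℝ)) < a ↔ k ≤ K) := by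
    intro k
    rw [ENNReal.ofReal_lt_iff_lt_toReal (by positivity) hatop]
    exact hKiff k
  set F : ℤ → ℝ≥0∞ := fun k => (if ENNReal.ofReal (δ ^ (k : ℝ)) < a
      then ENNReal.ofReal ((δ ^ R - 1) * δ ^ ((k : ℝ) * R)) else 0) with hFdef
  have hshift : ∑' k : ℤ, F k = ∑' j : ℕ, F (K - j) := by
    refine tsum_int_shift F K (fun k hk => ?_)
    simp only [hFdef]
    rw [if_neg]
    rw [hcond k]
    omega
  rw [hshift]
  have hterm : ∀ j : ℕ, F (K - j) =
      ENNReal.ofReal ((δ ^ R - 1) * δ ^ ((K : ℝ) * R)) * (ENNReal.ofReal (δ ^ (-R))) ^ j := by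
    intro j
    have hmem : ((K - j : ℤ)) ≤ K := by omega
    simp only [hFdef]
    rw [if_pos ((hcond _).2 hmem)]
    rw [← ENNReal.ofReal_pow (by positivity), ← ENNReal.ofReal_mul (by nlinarith [sub_pos.2 hδR, Real.rpow_pos_of_pos hδ0 ((K:ℝ)*R)])]
    congr 1
    have : ((δ : ℝ) ^ (-R)) ^ (j:ℕ) = δ ^ (-(R * j)) := by
      rw [← Real.rpow_natCast (δ ^ (-R)) j, ← Real.rpow_mul (le_of_lt hδ0)]
      ring_nf
    rw [this, mul_assoc, ← Real.rpow_add hδ0]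
    congr 2
    push_cast
    ring
  rw [tsum_congr hterm, ENNReal.tsum_mul_left, ENNReal.tsum_geometric]
  -- now a pure ofReal computation
  have hx0 : (0:ℝ) < δ ^ (-R) := Real.rpow_pos_of_pos hδ0 _
  have hx1 : δ ^ (-R) < 1 := by
    rw [Real.rpow_neg (le_of_lt hδ0)]
    rw [inv_lt_one_iff₀]
    right; linarith
  have hgeom : (1 - ENNReal.ofReal (δ ^ (-R)))⁻¹ = ENNReal.ofReal ((1 - δ ^ (-R))⁻¹) := by
    rw [← ENNReal.ofReal_one, ← ENNReal.ofReal_sub _ (le_of_lt hx0),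
      ENNReal.ofReal_inv_of_pos (by linarith)]
  rw [hgeom, ← ENNReal.ofReal_mul (by nlinarith [sub_pos.2 hδR, Real.rpow_pos_of_pos hδ0 ((K:ℝ)*R)])]
  have ha' : a = ENNReal.ofReal A := (ENNReal.ofReal_toReal hatop).symm
  rw [ha', ENNReal.ofReal_rpow_of_pos hA]
  refine ENNReal.ofReal_le_ofReal ?_
  -- real inequality : A^R ≤ (δ^R-1) δ^{KR} (1-δ^{-R})⁻¹ = δ^{(K+1)R}
  have hsum : (δ ^ R - 1) * δ ^ ((K : ℝ) * R) * (1 - δ ^ (-R))⁻¹ = δ ^ (((K : ℝ) + 1) * R) := by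
    have h1 : 1 - δ ^ (-R) = (δ ^ R - 1) / δ ^ R := by
      rw [Real.rpow_neg (le_of_lt hδ0)]
      field_simp
    rw [h1, inv_div]
    have hne : δ ^ R - 1 ≠ 0 := ne_of_gt (by linarith)
    have h3 : (δ ^ R - 1) * δ ^ ((K:ℝ) * R) * (δ ^ R / (δ ^ R - 1)) =
        δ ^ ((K:ℝ) * R) * δ ^ R := by
      field_simp
    rw [h3, ← Real.rpow_add hδ0]
    congr 1
    ring
  rw [hsum]
  calc A ^ R ≤ (δ ^ ((K:ℝ) + 1)) ^ R := by
        refine Real.rpow_le_rpow (le_of_lt hA) hKub (le_of_lt hR0)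
    _ = δ ^ (((K:ℝ) + 1) * R) := by rw [← Real.rpow_mul (le_of_lt hδ0)]


lemma young_z {R : ℝ} (hR : 1 < R) {z : ℝ} (hz : 0 ≤ z) :
    z ≤ z ^ R / R + (R - 1) / R := by
  have hb := one_add_mul_self_le_rpow_one_add (s := z - 1) (by linarith) hR.le
  have h1 : (1 : ℝ) + (z - 1) = z := by ring
  rw [h1] at hb
  have hR0 : (0:ℝ) < R := by linarith
  have h2 : R * z ≤ z ^ R + (R - 1) := by nlinarith
  calc z = (R * z) / R := by field_simp
    _ ≤ (z ^ R + (R - 1)) / R := by gcongr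
    _ = z ^ R / R + (R - 1) / R := by ring

lemma young_composite {R A u c₁ c₂ : ℝ} (hR : 1 < R) (hA : 0 < A) (hu : 0 < u)
    (h1 : 0 < c₁) (h2 : 0 < c₂) :
    A * u ^ (R - 1) * c₁ ≤ A ^ R * c₁ ^ R * c₂ ^ (1 - R) / R + (R - 1) / R * (u ^ R * c₂) := by
  have hR0 : (0:ℝ) < R := by linarith
  set z := A * c₁ / (u * c₂) with hzdef
  have hz0 : 0 < z := by positivity
  have hy := young_z hR hz0.le
  have huR : u ^ R = u ^ (R - 1) * u := by
    rw [← Real.rpow_add_one hu.ne' (R - 1)]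
    congr 1
    ring
  have key1 : z * (u ^ R * c₂) = A * u ^ (R - 1) * c₁ := by
    rw [hzdef, huR]
    field_simp
  have key2 : z ^ R * (u ^ R * c₂) / R = A ^ R * c₁ ^ R * c₂ ^ (1 - R) / R := by
    have hzR : z ^ R = A ^ R * c₁ ^ R / (u ^ R * c₂ ^ R) := by
      rw [hzdef, Real.div_rpow (by positivity) (by positivity),
        Real.mul_rpow hA.le h1.le, Real.mul_rpow hu.le h2.le]
    have hc2 : c₂ ^ (1 - R) = c₂ * (c₂ ^ R)⁻¹ := by
      rw [show (1:ℝ) - R = 1 + (-R) by ring, Real.rpow_add h2, Real.rpow_one,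
        Real.rpow_neg h2.le]
    rw [hzR, hc2]
    have hu' : u ^ R ≠ 0 := by positivity
    have hc' : c₂ ^ R ≠ 0 := by positivity
    field_simp
  have hKpos : (0:ℝ) < u ^ R * c₂ := by positivity
  calc A * u ^ (R - 1) * c₁ = z * (u ^ R * c₂) := key1.symm
    _ ≤ (z ^ R / R + (R - 1) / R) * (u ^ R * c₂) := mul_le_mul_of_nonneg_right hy hKpos.le
    _ = z ^ R * (u ^ R * c₂) / R + (R - 1) / R * (u ^ R * c₂) := by ring
    _ = A ^ R * c₁ ^ R * c₂ ^ (1 - R) / R + (R - 1) / R * (u ^ R * c₂) := by rw [key2]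

lemma const_algebra {δ R : ℝ} (hδ : 1 < δ) (hR : 1 < R) :
    (δ ^ R - 1) * ((1 - δ ^ (-(R - 1)))⁻¹) ^ R * ((1 - δ ^ (-R))⁻¹) ^ (1 - R)
      = ((δ ^ R - 1) / (δ ^ (R - 1) - 1)) ^ R := by
  have hδ0 : (0:ℝ) < δ := lt_trans one_pos hδ
  set y := δ ^ (R - 1) with hydef
  set Y := δ ^ R with hYdef
  have hy1 : 1 < y :=
    (Real.one_lt_rpow_iff_of_pos hδ0).2 (Or.inl ⟨hδ, by linarith⟩)
  have hY1 : 1 < Y :=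
    (Real.one_lt_rpow_iff_of_pos hδ0).2 (Or.inl ⟨hδ, by linarith⟩)
  have hy0 : (0:ℝ) < y := by linarith
  have hY0 : (0:ℝ) < Y := by linarith
  have h1 : 1 - δ ^ (-(R - 1)) = (y - 1) / y := by
    rw [Real.rpow_neg hδ0.le, ← hydef]
    field_simp
  have h2 : 1 - δ ^ (-R) = (Y - 1) / Y := by
    rw [Real.rpow_neg hδ0.le, ← hYdef]
    field_simp
  rw [h1, h2, inv_div, inv_div]
  have hc : ((Y / (Y - 1)) : ℝ) ^ (1 - R) = ((Y - 1) / Y) ^ (R - 1) := by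
    rw [show (1:ℝ) - R = -(R - 1) by ring,
      Real.rpow_neg (le_of_lt (div_pos hY0 (by linarith))),
      ← Real.inv_rpow (le_of_lt (div_pos hY0 (by linarith))), inv_div]
  rw [hc]
  have key : y ^ R = Y ^ (R - 1) := by
    rw [hydef, hYdef, ← Real.rpow_mul hδ0.le, ← Real.rpow_mul hδ0.le]
    congr 1
    ring
  have key2 : (Y - 1) ^ (R - 1) * (Y - 1) = (Y - 1) ^ R := by
    rw [← Real.rpow_add_one (ne_of_gt (by linarith : (0:ℝ) < Y - 1)) (R - 1)]
    congr 1
    ring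
  rw [Real.div_rpow hy0.le (by linarith : (0:ℝ) ≤ y - 1),
    Real.div_rpow (by linarith : (0:ℝ) ≤ Y - 1) hY0.le,
    Real.div_rpow (by linarith : (0:ℝ) ≤ Y - 1) (by linarith : (0:ℝ) ≤ y - 1), key]
  have hden1 : ((y - 1):ℝ) ^ R ≠ 0 := ne_of_gt (Real.rpow_pos_of_pos (by linarith) _)
  have hden2 : ((Y):ℝ) ^ (R - 1) ≠ 0 := ne_of_gt (Real.rpow_pos_of_pos hY0 _)
  field_simp
  rw [← key2]
  ring

lemma tendsto_Cdelta {R : ℝ} (hR : 1 < R) :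
    Tendsto (fun δ : ℝ => ((δ ^ R - 1) / (δ ^ (R - 1) - 1)) ^ R) (𝓝[>] (1:ℝ))
      (𝓝 ((R / (R - 1)) ^ R)) := by
  have hmono : 𝓝[>] (1:ℝ) ≤ 𝓝[≠] (1:ℝ) := nhdsWithin_mono _ (fun x hx => ne_of_gt hx)
  have hslope : ∀ P : ℝ, Tendsto (fun δ : ℝ => (δ ^ P - 1) / (δ - 1)) (𝓝[>] 1) (𝓝 P) := by
    intro P
    have hd : HasDerivAt (fun x : ℝ => x ^ P) (P * (1:ℝ) ^ (P - 1)) 1 :=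
      Real.hasDerivAt_rpow_const (Or.inl one_ne_zero)
    have hds := hasDerivAt_iff_tendsto_slope.1 hd
    rw [Real.one_rpow, mul_one] at hds
    refine (hds.mono_left hmono).congr (fun δ => ?_)
    rw [slope_def_field]
    rw [Real.one_rpow]
  have hq : Tendsto (fun δ : ℝ => (δ ^ R - 1) / (δ ^ (R - 1) - 1)) (𝓝[>] 1)
      (𝓝 (R / (R - 1))) := by
    have hd := (hslope R).div (hslope (R - 1)) (by linarith : R - 1 ≠ 0)
    refine hd.congr' ?_
    filter_upwards [self_mem_nhdsWithin] with δ hδ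
    have hδ1 : δ - 1 ≠ 0 := sub_ne_zero.2 (ne_of_gt hδ)
    rw [Pi.div_apply, div_div_div_eq, mul_comm (δ - 1), mul_div_mul_right _ _ hδ1]
  exact hq.rpow_const (Or.inr (by positivity))


/-- Discrete layer-cake upper bound for the truncated part. -/
lemma tsum_layer_le {δ R : ℝ} (hδ : 1 < δ) (hR : 1 < R) (a : ℝ≥0∞) :
    ∑' k : ℤ, ENNReal.ofReal (R * (δ ^ R - 1) * δ ^ ((k : ℝ) * (R - 1))) *
        (a - ENNReal.ofReal (δ ^ (k : ℝ) * ((R - 1) / R))) ≤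
      ENNReal.ofReal (((δ ^ R - 1) / (δ ^ (R - 1) - 1)) ^ R) * a ^ R := by
  have hδ0 : (0:ℝ) < δ := lt_trans one_pos hδ
  have hR0 : (0:ℝ) < R := lt_trans one_pos hR
  have hR1 : (0:ℝ) < R - 1 := by linarith
  have hδR : (1:ℝ) < δ ^ R :=
    (Real.one_lt_rpow_iff_of_pos hδ0).2 (Or.inl ⟨hδ, hR0⟩)
  have hδR1 : (1:ℝ) < δ ^ (R - 1) :=
    (Real.one_lt_rpow_iff_of_pos hδ0).2 (Or.inl ⟨hδ, hR1⟩)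
  have hCpos : (0:ℝ) < ((δ ^ R - 1) / (δ ^ (R - 1) - 1)) ^ R :=
    Real.rpow_pos_of_pos (div_pos (by linarith) (by linarith)) _
  rcases eq_or_ne a ⊤ with rfl | hatop
  · rw [ENNReal.top_rpow_of_pos hR0, ENNReal.mul_top (ENNReal.ofReal_pos.2 hCpos).ne']
    exact le_top
  rcases eq_or_ne a 0 with rfl | ha0
  · simp [zero_tsub]
  set A : ℝ := a.toReal with hAdef
  have hA : 0 < A := ENNReal.toReal_pos ha0 hatop
  have ha' : a = ENNReal.ofReal A := (ENNReal.ofReal_toReal hatop).symm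
  set A' : ℝ := R / (R - 1) * A with hA'def
  have hA' : 0 < A' := by positivity
  obtain ⟨K, hKiff, -⟩ := exists_int_level hδ hA'
  set T : ℤ → ℝ≥0∞ := fun k => ENNReal.ofReal (R * (δ ^ R - 1) * δ ^ ((k : ℝ) * (R - 1))) *
      (a - ENNReal.ofReal (δ ^ (k : ℝ) * ((R - 1) / R))) with hTdef
  have hvanish : ∀ k : ℤ, K < k → T k = 0 := by
    intro k hk
    have h1 : A' ≤ δ ^ (k:ℝ) := by
      by_contra hcon
      push_neg at hcon
      exact absurd ((hKiff k).1 hcon) (by omega)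
    have h2 : A ≤ δ ^ (k:ℝ) * ((R - 1) / R) := by
      have := mul_le_mul_of_nonneg_right h1 (le_of_lt (div_pos hR1 hR0))
      calc A = A' * ((R - 1) / R) := by rw [hA'def]; field_simp
        _ ≤ δ ^ (k:ℝ) * ((R - 1) / R) := this
    have hz : a - ENNReal.ofReal (δ ^ (k : ℝ) * ((R - 1) / R)) = 0 := by
      rw [ha']
      exact tsub_eq_zero_of_le (ENNReal.ofReal_le_ofReal h2)
    rw [hTdef]
    simp only [hz, mul_zero]
  rw [tsum_int_shift T K hvanish]
  -- real coefficients
  set u : ℝ := δ ^ ((K:ℝ)) with hudef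
  have hu : 0 < u := Real.rpow_pos_of_pos hδ0 _
  set ρ₁ : ℝ := δ ^ (-(R - 1)) with hρ₁def
  set ρ₂ : ℝ := δ ^ (-R) with hρ₂def
  have hρ₁0 : 0 < ρ₁ := Real.rpow_pos_of_pos hδ0 _
  have hρ₂0 : 0 < ρ₂ := Real.rpow_pos_of_pos hδ0 _
  have hρ₁1 : ρ₁ < 1 := by
    rw [hρ₁def, Real.rpow_neg hδ0.le, inv_lt_one_iff₀]
    right; linarith
  have hρ₂1 : ρ₂ < 1 := by
    rw [hρ₂def, Real.rpow_neg hδ0.le, inv_lt_one_iff₀]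
    right; linarith
  set C₁ : ℝ := R * (δ ^ R - 1) * δ ^ ((K:ℝ) * (R - 1)) * A with hC₁def
  set C₂ : ℝ := R * (δ ^ R - 1) * δ ^ ((K:ℝ) * R) * ((R - 1) / R) with hC₂def
  set v : ℕ → ℝ := fun j => C₁ * ρ₁ ^ j - C₂ * ρ₂ ^ j with hvdef
  have hexp : ∀ (c : ℝ) (j : ℕ), δ ^ (((K:ℝ) - (j:ℕ)) * c) = δ ^ ((K:ℝ) * c) * (δ ^ (-c)) ^ j := by
    intro c j
    rw [← Real.rpow_natCast (δ ^ (-c)) j, ← Real.rpow_mul hδ0.le, ← Real.rpow_add hδ0]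
    congr 1
    ring
  have hterm : ∀ j : ℕ, T (K - j) = ENNReal.ofReal (v j) := by
    intro j
    have hlt : δ ^ (((K - j : ℤ)):ℝ) < A' := (hKiff (K - j)).2 (by omega)
    have hcast : (((K - j : ℤ)):ℝ) = (K:ℝ) - (j:ℕ) := by push_cast; ring
    have htrunc : δ ^ (((K - j : ℤ)):ℝ) * ((R - 1) / R) ≤ A := by
      have := mul_le_mul_of_nonneg_right hlt.le (le_of_lt (div_pos hR1 hR0))
      calc δ ^ (((K - j : ℤ)):ℝ) * ((R - 1) / R) ≤ A' * ((R - 1) / R) := this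
        _ = A := by rw [hA'def]; field_simp
    have hcoef : (0:ℝ) ≤ R * (δ ^ R - 1) * δ ^ ((((K - j : ℤ)):ℝ) * (R - 1)) := by
      have h := Real.rpow_pos_of_pos hδ0 ((((K - j : ℤ)):ℝ) * (R - 1))
      exact mul_nonneg (mul_nonneg hR0.le (by linarith)) h.le
    rw [hTdef]
    simp only
    rw [ha', ← ENNReal.ofReal_sub _ (by positivity), ← ENNReal.ofReal_mul hcoef]
    congr 1
    rw [hcast, hexp (R - 1) j]
    have h1j : δ ^ ((K:ℝ) - (j:ℕ)) = δ ^ ((K:ℝ) * 1) * (δ ^ (-(1:ℝ))) ^ j := by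
      rw [← hexp 1 j, mul_one]
    rw [h1j, hvdef, hC₁def, hC₂def]
    simp only
    have hq : ρ₁ ^ j * (δ ^ (-(1:ℝ))) ^ j = ρ₂ ^ j := by
      rw [hρ₁def, hρ₂def, ← mul_pow, ← Real.rpow_add hδ0]
      congr 2
      ring
    have hKm : δ ^ ((K:ℝ) * (R - 1)) * δ ^ ((K:ℝ) * 1) = δ ^ ((K:ℝ) * R) := by
      rw [← Real.rpow_add hδ0]
      congr 1
      ring
    calc R * (δ ^ R - 1) * (δ ^ ((K:ℝ) * (R - 1)) * ρ₁ ^ j) *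
          (A - δ ^ ((K:ℝ) * 1) * (δ ^ (-(1:ℝ))) ^ j * ((R - 1) / R))
        = R * (δ ^ R - 1) * δ ^ ((K:ℝ) * (R - 1)) * A * ρ₁ ^ j -
          R * (δ ^ R - 1) * (δ ^ ((K:ℝ) * (R - 1)) * δ ^ ((K:ℝ) * 1)) *
            (ρ₁ ^ j * (δ ^ (-(1:ℝ))) ^ j) * ((R - 1) / R) := by ring
      _ = R * (δ ^ R - 1) * δ ^ ((K:ℝ) * (R - 1)) * A * ρ₁ ^ j -
          R * (δ ^ R - 1) * δ ^ ((K:ℝ) * R) * ((R - 1) / R) * ρ₂ ^ j := by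
            rw [hq, hKm]; ring
  have hsum1 : Summable (fun j : ℕ => C₁ * ρ₁ ^ j) :=
    (summable_geometric_of_lt_one hρ₁0.le hρ₁1).mul_left C₁
  have hsum2 : Summable (fun j : ℕ => C₂ * ρ₂ ^ j) :=
    (summable_geometric_of_lt_one hρ₂0.le hρ₂1).mul_left C₂
  have hsumv : Summable v := hsum1.sub hsum2
  have hvnn : ∀ j : ℕ, 0 ≤ v j := by
    intro j
    have h := hterm j
    -- nonnegativity directly from the real form
    have hlt : δ ^ (((K - j : ℤ)):ℝ) < A' := (hKiff (K - j)).2 (by omega)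
    have hcast : (((K - j : ℤ)):ℝ) = (K:ℝ) - (j:ℕ) := by push_cast; ring
    have htrunc : δ ^ ((K:ℝ) - (j:ℕ)) * ((R - 1) / R) ≤ A := by
      rw [← hcast]
      have := mul_le_mul_of_nonneg_right hlt.le (le_of_lt (div_pos hR1 hR0))
      calc δ ^ (((K - j : ℤ)):ℝ) * ((R - 1) / R) ≤ A' * ((R - 1) / R) := this
        _ = A := by rw [hA'def]; field_simp
    -- v j = coef * (A - trunc)
    have hv : v j = R * (δ ^ R - 1) * δ ^ (((K:ℝ) - (j:ℕ)) * (R - 1)) *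
        (A - δ ^ ((K:ℝ) - (j:ℕ)) * ((R - 1) / R)) := by
      rw [hvdef]
      simp only
      rw [hexp (R - 1) j]
      have h1j : δ ^ ((K:ℝ) - (j:ℕ)) = δ ^ ((K:ℝ) * 1) * (δ ^ (-(1:ℝ))) ^ j := by
        rw [← hexp 1 j, mul_one]
      rw [h1j, hC₁def, hC₂def]
      have hq : ρ₁ ^ j * (δ ^ (-(1:ℝ))) ^ j = ρ₂ ^ j := by
        rw [hρ₁def, hρ₂def, ← mul_pow, ← Real.rpow_add hδ0]
        congr 2
        ring
      have hKm : δ ^ ((K:ℝ) * (R - 1)) * δ ^ ((K:ℝ) * 1) = δ ^ ((K:ℝ) * R) := by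
        rw [← Real.rpow_add hδ0]
        congr 1
        ring
      rw [← hq, ← hKm]
      ring
    rw [hv]
    have hc : (0:ℝ) < δ ^ (((K:ℝ) - (j:ℕ)) * (R - 1)) := Real.rpow_pos_of_pos hδ0 _
    have h2 : (0:ℝ) ≤ A - δ ^ ((K:ℝ) - (j:ℕ)) * ((R - 1) / R) := by linarith
    exact mul_nonneg (mul_nonneg (mul_nonneg hR0.le (by linarith)) hc.le) h2
  rw [tsum_congr hterm, ← ENNReal.ofReal_tsum_of_nonneg hvnn hsumv]
  rw [ha', ENNReal.ofReal_rpow_of_pos hA, ← ENNReal.ofReal_mul hCpos.le]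
  refine ENNReal.ofReal_le_ofReal ?_
  -- real part
  have htv : ∑' j, v j = C₁ * (1 - ρ₁)⁻¹ - C₂ * (1 - ρ₂)⁻¹ := by
    rw [hvdef, Summable.tsum_sub hsum1 hsum2, tsum_mul_left, tsum_mul_left,
      tsum_geometric_of_lt_one hρ₁0.le hρ₁1, tsum_geometric_of_lt_one hρ₂0.le hρ₂1]
  rw [htv]
  set c₁ : ℝ := (1 - ρ₁)⁻¹ with hc₁def
  set c₂ : ℝ := (1 - ρ₂)⁻¹ with hc₂def
  have hc₁ : 0 < c₁ := by rw [hc₁def]; exact inv_pos.2 (by linarith)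
  have hc₂ : 0 < c₂ := by rw [hc₂def]; exact inv_pos.2 (by linarith)
  have hyoung := young_composite hR hA hu hc₁ hc₂
  have hP : δ ^ ((K:ℝ) * (R - 1)) = u ^ (R - 1) := by
    rw [hudef, ← Real.rpow_mul hδ0.le]
  have hQ : δ ^ ((K:ℝ) * R) = u ^ R := by
    rw [hudef, ← Real.rpow_mul hδ0.le]
  have hstep : C₁ * c₁ - C₂ * c₂ ≤ (δ ^ R - 1) * (A ^ R * c₁ ^ R * c₂ ^ (1 - R)) := by
    have e1 : C₁ * c₁ = R * (δ ^ R - 1) * (A * u ^ (R - 1) * c₁) := by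
      rw [hC₁def, hP]; ring
    have e2 : C₂ * c₂ = R * (δ ^ R - 1) * ((R - 1) / R * (u ^ R * c₂)) := by
      rw [hC₂def, hQ]; ring
    have hK0 : (0:ℝ) ≤ R * (δ ^ R - 1) := mul_nonneg hR0.le (by linarith)
    have h3 := mul_le_mul_of_nonneg_left hyoung hK0
    rw [e1, e2]
    have e3 : R * (δ ^ R - 1) * (A ^ R * c₁ ^ R * c₂ ^ (1 - R) / R + (R - 1) / R * (u ^ R * c₂))
        = (δ ^ R - 1) * (A ^ R * c₁ ^ R * c₂ ^ (1 - R)) +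
          R * (δ ^ R - 1) * ((R - 1) / R * (u ^ R * c₂)) := by
      field_simp
    linarith [e3 ▸ h3]
  calc C₁ * c₁ - C₂ * c₂ ≤ (δ ^ R - 1) * (A ^ R * c₁ ^ R * c₂ ^ (1 - R)) := hstep
    _ = ((δ ^ R - 1) * c₁ ^ R * c₂ ^ (1 - R)) * A ^ R := by ring
    _ = ((δ ^ R - 1) / (δ ^ (R - 1) - 1)) ^ R * A ^ R := by
        rw [hc₁def, hc₂def, hρ₁def, hρ₂def, const_algebra hδ hR]


noncomputable def mx (μ : Measure α) (𝒟 : Set (Set α)) (v : α → ℝ≥0∞) (x : α) : ℝ≥0∞ :=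
  ⨆ Q ∈ 𝒟, ⨆ (_ : x ∈ Q), (μ Q)⁻¹ * ∫⁻ y in Q, v y ∂μ

lemma le_mx {μ : Measure α} {𝒟 : Set (Set α)} {v : α → ℝ≥0∞} {Q : Set α} {x : α}
    (hQ : Q ∈ 𝒟) (hx : x ∈ Q) :
    (μ Q)⁻¹ * ∫⁻ y in Q, v y ∂μ ≤ mx μ 𝒟 v x := by
  calc (μ Q)⁻¹ * ∫⁻ y in Q, v y ∂μ
      ≤ ⨆ (_ : x ∈ Q), (μ Q)⁻¹ * ∫⁻ y in Q, v y ∂μ := le_iSup (fun _ => _) hx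
    _ ≤ ⨆ (_ : Q ∈ 𝒟), ⨆ (_ : x ∈ Q), (μ Q)⁻¹ * ∫⁻ y in Q, v y ∂μ := le_iSup (fun _ => _) hQ
    _ ≤ mx μ 𝒟 v x := le_iSup (fun Q => ⨆ (_ : Q ∈ 𝒟), ⨆ (_ : x ∈ Q), (μ Q)⁻¹ * ∫⁻ y in Q, v y ∂μ) Q

lemma mx_measurable {μ : Measure α} {𝒟 : Set (Set α)} (hcount : 𝒟.Countable)
    (hmeas : ∀ Q ∈ 𝒟, MeasurableSet Q) (v : α → ℝ≥0∞) :
    Measurable (mx μ 𝒟 v) := by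
  classical
  haveI : Countable ↥𝒟 := hcount.to_subtype
  have heq : mx μ 𝒟 v = fun x => ⨆ Q : 𝒟,
      Set.indicator (Q : Set α) (fun _ => (μ Q)⁻¹ * ∫⁻ y in (Q : Set α), v y ∂μ) x := by
    funext x
    rw [mx, iSup_subtype']
    congr 1
    funext Q
    by_cases hx : x ∈ (Q : Set α)
    · rw [Set.indicator_of_mem hx]
      exact le_antisymm (iSup_le fun _ => le_rfl) (le_iSup (fun _ => _) hx)
    · rw [Set.indicator_of_notMem hx]
      exact le_antisymm (iSup_le fun h => absurd h hx) zero_le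
  rw [heq]
  exact Measurable.iSup fun Q => measurable_const.indicator (hmeas Q Q.2)

lemma mx_le_add {μ : Measure α} {𝒟 : Set (Set α)}
    (hfin : ∀ Q ∈ 𝒟, 0 < μ Q ∧ μ Q < ⊤)
    {g h : α → ℝ≥0∞} {c : ℝ≥0∞} (hgh : ∀ y, g y ≤ h y + c) (x : α) :
    mx μ 𝒟 g x ≤ mx μ 𝒟 h x + c := by
  rw [mx]
  refine iSup₂_le fun Q hQ => iSup_le fun hx => ?_
  have h0 : μ Q ≠ 0 := (hfin Q hQ).1.ne'
  have htop : μ Q ≠ ⊤ := (hfin Q hQ).2.ne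
  have hint : ∫⁻ y in Q, g y ∂μ ≤ (∫⁻ y in Q, h y ∂μ) + c * μ Q := by
    calc ∫⁻ y in Q, g y ∂μ ≤ ∫⁻ y in Q, (h y + c) ∂μ := lintegral_mono hgh
      _ = (∫⁻ y in Q, h y ∂μ) + c * μ Q := by
          rw [lintegral_add_right _ measurable_const, setLIntegral_const]
  calc (μ Q)⁻¹ * ∫⁻ y in Q, g y ∂μ
      ≤ (μ Q)⁻¹ * ((∫⁻ y in Q, h y ∂μ) + c * μ Q) := mul_le_mul_right hint _
    _ = (μ Q)⁻¹ * ∫⁻ y in Q, h y ∂μ + c * ((μ Q)⁻¹ * μ Q) := by ring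
    _ = (μ Q)⁻¹ * ∫⁻ y in Q, h y ∂μ + c := by rw [ENNReal.inv_mul_cancel h0 htop, mul_one]
    _ ≤ mx μ 𝒟 h x + c := add_le_add_left (le_mx hQ hx) c

/-- Fefferman–Stein weak type (1,1) for the pair `(w, mx w)`. -/
lemma weak_type {μ : Measure α} {𝒟 : Set (Set α)} (hcount : 𝒟.Countable)
    (hmeas : ∀ Q ∈ 𝒟, MeasurableSet Q)
    (hfin : ∀ Q ∈ 𝒟, 0 < μ Q ∧ μ Q < ⊤)
    (hnest : ∀ Q ∈ 𝒟, ∀ Q' ∈ 𝒟, Disjoint Q Q' ∨ Q ⊆ Q' ∨ Q' ⊆ Q)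
    {w : α → ℝ≥0∞} (hw : Measurable w) {h : α → ℝ≥0∞} (hh : Measurable h)
    {s : ℝ≥0∞} (hs0 : s ≠ 0) (hstop : s ≠ ⊤) :
    (μ.withDensity w) {x | s < mx μ 𝒟 h x} ≤ s⁻¹ * ∫⁻ y, h y * mx μ 𝒟 w y ∂μ := by
  classical
  set ν := μ.withDensity w with hνdef
  set τ := μ.withDensity (fun y => h y * mx μ 𝒟 w y) with hτdef
  have hmxw : Measurable (mx μ 𝒟 w) := mx_measurable hcount hmeas w
  set 𝒞 : Set (Set α) := {Q | Q ∈ 𝒟 ∧ s < (μ Q)⁻¹ * ∫⁻ y in Q, h y ∂μ} with h𝒞def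
  have h𝒞sub : 𝒞 ⊆ 𝒟 := fun Q hQ => hQ.1
  have hsubset : {x | s < mx μ 𝒟 h x} ⊆ ⋃₀ 𝒞 := by
    intro x hx
    simp only [Set.mem_setOf_eq, mx] at hx
    rw [lt_iSup_iff] at hx
    obtain ⟨Q, hQ⟩ := hx
    rw [lt_iSup_iff] at hQ
    obtain ⟨hQ𝒟, hQ2⟩ := hQ
    rw [lt_iSup_iff] at hQ2
    obtain ⟨hxQ, hlt⟩ := hQ2
    exact ⟨Q, ⟨hQ𝒟, hlt⟩, hxQ⟩
  have hbound : ∀ Q ∈ 𝒞, ν Q ≤ s⁻¹ * τ Q := by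
    rintro Q ⟨hQ𝒟, hQlt⟩
    have h0 : μ Q ≠ 0 := (hfin Q hQ𝒟).1.ne'
    have htop : μ Q ≠ ⊤ := (hfin Q hQ𝒟).2.ne
    have hQm : MeasurableSet Q := hmeas Q hQ𝒟
    have hνQ : ν Q = ∫⁻ y in Q, w y ∂μ := withDensity_apply w hQm
    have hτQ : τ Q = ∫⁻ y in Q, h y * mx μ 𝒟 w y ∂μ := withDensity_apply _ hQm
    have hIh : s * μ Q ≤ ∫⁻ y in Q, h y ∂μ := by
      calc s * μ Q ≤ ((μ Q)⁻¹ * ∫⁻ y in Q, h y ∂μ) * μ Q :=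
            mul_le_mul_left hQlt.le _
        _ = ∫⁻ y in Q, h y ∂μ := by
            rw [mul_comm ((μ Q)⁻¹) _, mul_assoc, ENNReal.inv_mul_cancel h0 htop, mul_one]
    have hτQge : s * ν Q ≤ τ Q := by
      rw [hτQ, hνQ]
      calc s * ∫⁻ y in Q, w y ∂μ
          = s * (μ Q * ((μ Q)⁻¹ * ∫⁻ y in Q, w y ∂μ)) := by
            rw [← mul_assoc (μ Q), ENNReal.mul_inv_cancel h0 htop, one_mul]
        _ = (s * μ Q) * ((μ Q)⁻¹ * ∫⁻ y in Q, w y ∂μ) := by ring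
        _ ≤ (∫⁻ y in Q, h y ∂μ) * ((μ Q)⁻¹ * ∫⁻ y in Q, w y ∂μ) :=
            mul_le_mul_left hIh _
        _ = ∫⁻ y in Q, h y * ((μ Q)⁻¹ * ∫⁻ y' in Q, w y' ∂μ) ∂μ := by
            rw [lintegral_mul_const _ hh]
        _ ≤ ∫⁻ y in Q, h y * mx μ 𝒟 w y ∂μ := by
            refine setLIntegral_mono' hQm (fun y hy => ?_)
            exact mul_le_mul_right (le_mx hQ𝒟 hy) _
    calc ν Q = s⁻¹ * (s * ν Q) := by
          rw [← mul_assoc, ENNReal.inv_mul_cancel hs0 hstop, one_mul]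
      _ ≤ s⁻¹ * τ Q := mul_le_mul_right hτQge _
  calc ν {x | s < mx μ 𝒟 h x} ≤ ν (⋃₀ 𝒞) := measure_mono hsubset
    _ ≤ s⁻¹ * τ Set.univ :=
        nested_countable_bound ν τ s⁻¹ 𝒞 (hcount.mono h𝒞sub)
          (fun Q hQ => hmeas Q (h𝒞sub hQ))
          (fun Q hQ Q' hQ' => hnest Q (h𝒞sub hQ) Q' (h𝒞sub hQ'))
          hbound
    _ = s⁻¹ * ∫⁻ y, h y * mx μ 𝒟 w y ∂μ := by
        rw [hτdef, withDensity_apply _ MeasurableSet.univ, Measure.restrict_univ]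


lemma core_delta {μ : Measure α} {𝒟 : Set (Set α)} (hcount : 𝒟.Countable)
    (hmeas : ∀ Q ∈ 𝒟, MeasurableSet Q)
    (hfin : ∀ Q ∈ 𝒟, 0 < μ Q ∧ μ Q < ⊤)
    (hnest : ∀ Q ∈ 𝒟, ∀ Q' ∈ 𝒟, Disjoint Q Q' ∨ Q ⊆ Q' ∨ Q' ⊆ Q)
    {w : α → ℝ≥0∞} (hw : Measurable w) {g : α → ℝ≥0∞} (hg : Measurable g)
    {R : ℝ} (hR : 1 < R) {δ : ℝ} (hδ : 1 < δ) :
    ∫⁻ x, (mx μ 𝒟 g x) ^ R * w x ∂μ ≤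
      ENNReal.ofReal (((δ ^ R - 1) / (δ ^ (R - 1) - 1)) ^ R) *
        ∫⁻ x, (g x) ^ R * mx μ 𝒟 w x ∂μ := by
  classical
  have hδ0 : (0:ℝ) < δ := lt_trans one_pos hδ
  have hR0 : (0:ℝ) < R := lt_trans one_pos hR
  have hR1 : (0:ℝ) < R - 1 := by linarith
  have hmxg : Measurable (mx μ 𝒟 g) := mx_measurable hcount hmeas g
  have hmxw : Measurable (mx μ 𝒟 w) := mx_measurable hcount hmeas w
  set ν := μ.withDensity w with hνdef
  -- truncations
  set trc : ℤ → ℝ≥0∞ := fun k => ENNReal.ofReal (δ ^ (k:ℝ) * ((R - 1) / R)) with htrcdef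
  set hfun : ℤ → α → ℝ≥0∞ := fun k y => g y - trc k with hhdef
  have hhmeas : ∀ k, Measurable (hfun k) := fun k => hg.sub measurable_const
  set Φ : ℤ → ℝ≥0∞ := fun k => ∫⁻ y, hfun k y * mx μ 𝒟 w y ∂μ with hΦdef
  set S : ℤ → Set α := fun k => {x | ENNReal.ofReal (δ ^ (k:ℝ)) < mx μ 𝒟 g x} with hSdef
  have hSm : ∀ k, MeasurableSet (S k) := fun k => measurableSet_lt measurable_const hmxg
  have hT : ∫⁻ x, (mx μ 𝒟 g x) ^ R * w x ∂μ = ∫⁻ x, (mx μ 𝒟 g x) ^ R ∂ν := by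
    rw [hνdef, lintegral_withDensity_eq_lintegral_mul μ hw (hmxg.pow_const R)]
    exact lintegral_congr fun x => (mul_comm _ _)
  rw [hT]
  -- Step 1 : layer cake
  have step1 : ∫⁻ x, (mx μ 𝒟 g x) ^ R ∂ν ≤
      ∑' k : ℤ, ENNReal.ofReal ((δ ^ R - 1) * δ ^ ((k:ℝ) * R)) * ν (S k) := by
    calc ∫⁻ x, (mx μ 𝒟 g x) ^ R ∂ν
        ≤ ∫⁻ x, ∑' k : ℤ, (if ENNReal.ofReal (δ ^ (k:ℝ)) < mx μ 𝒟 g x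
            then ENNReal.ofReal ((δ ^ R - 1) * δ ^ ((k:ℝ) * R)) else 0) ∂ν :=
          lintegral_mono fun x => pow_le_tsum_layer hδ hR _
      _ = ∑' k : ℤ, ∫⁻ x, (if ENNReal.ofReal (δ ^ (k:ℝ)) < mx μ 𝒟 g x
            then ENNReal.ofReal ((δ ^ R - 1) * δ ^ ((k:ℝ) * R)) else 0) ∂ν := by
          refine lintegral_tsum fun k => ?_
          have : (fun x => (if ENNReal.ofReal (δ ^ (k:ℝ)) < mx μ 𝒟 g x
              then ENNReal.ofReal ((δ ^ R - 1) * δ ^ ((k:ℝ) * R)) else 0))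
              = (S k).indicator (fun _ => ENNReal.ofReal ((δ ^ R - 1) * δ ^ ((k:ℝ) * R))) := by
            funext x
            rw [Set.indicator_apply]
            rfl
          rw [this]
          exact (measurable_const.indicator (hSm k)).aemeasurable
      _ = ∑' k : ℤ, ENNReal.ofReal ((δ ^ R - 1) * δ ^ ((k:ℝ) * R)) * ν (S k) := by
          refine tsum_congr fun k => ?_
          have : (fun x => (if ENNReal.ofReal (δ ^ (k:ℝ)) < mx μ 𝒟 g x
              then ENNReal.ofReal ((δ ^ R - 1) * δ ^ ((k:ℝ) * R)) else 0))
              = (S k).indicator (fun _ => ENNReal.ofReal ((δ ^ R - 1) * δ ^ ((k:ℝ) * R))) := by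
            funext x
            rw [Set.indicator_apply]
            rfl
          rw [this, lintegral_indicator (hSm k), setLIntegral_const]
  -- Step 2 : weak type per level
  have step2 : ∀ k : ℤ, ν (S k) ≤ (ENNReal.ofReal (δ ^ (k:ℝ) / R))⁻¹ * Φ k := by
    intro k
    have hsplit : ENNReal.ofReal (δ ^ (k:ℝ)) =
        ENNReal.ofReal (δ ^ (k:ℝ) / R) + trc k := by
      rw [htrcdef, ← ENNReal.ofReal_add (by positivity) (by positivity)]
      congr 1
      field_simp
      ring
    have hsub : S k ⊆ {x | ENNReal.ofReal (δ ^ (k:ℝ) / R) < mx μ 𝒟 (hfun k) x} := by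
      intro x hx
      have hx' : ENNReal.ofReal (δ ^ (k:ℝ)) < mx μ 𝒟 g x := hx
      have hle : mx μ 𝒟 g x ≤ mx μ 𝒟 (hfun k) x + trc k :=
        mx_le_add hfin (fun y => le_tsub_add) x
      have : ENNReal.ofReal (δ ^ (k:ℝ) / R) + trc k < mx μ 𝒟 (hfun k) x + trc k := by
        rw [← hsplit]
        exact lt_of_lt_of_le hx' hle
      exact (ENNReal.add_lt_add_iff_right (by simp [htrcdef] : trc k ≠ ⊤)).1 this
    calc ν (S k) ≤ ν {x | ENNReal.ofReal (δ ^ (k:ℝ) / R) < mx μ 𝒟 (hfun k) x} :=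
          measure_mono hsub
      _ ≤ (ENNReal.ofReal (δ ^ (k:ℝ) / R))⁻¹ * Φ k :=
          weak_type hcount hmeas hfin hnest hw (hhmeas k)
            (by simp [ENNReal.ofReal_eq_zero, not_le]; positivity) ENNReal.ofReal_ne_top
  -- Step 3 : coefficient algebra
  have step3 : ∀ k : ℤ, ENNReal.ofReal ((δ ^ R - 1) * δ ^ ((k:ℝ) * R)) *
      ((ENNReal.ofReal (δ ^ (k:ℝ) / R))⁻¹ * Φ k) =
      ENNReal.ofReal (R * (δ ^ R - 1) * δ ^ ((k:ℝ) * (R - 1))) * Φ k := by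
    intro k
    have hpos : (0:ℝ) < δ ^ (k:ℝ) / R := by positivity
    rw [← mul_assoc, ← ENNReal.ofReal_inv_of_pos hpos,
      ← ENNReal.ofReal_mul (by
        have := Real.rpow_pos_of_pos hδ0 ((k:ℝ) * R)
        have h1 : (0:ℝ) < δ ^ R - 1 := by
          have : (1:ℝ) < δ ^ R := (Real.one_lt_rpow_iff_of_pos hδ0).2 (Or.inl ⟨hδ, hR0⟩)
          linarith
        positivity)]
    congr 1
    rw [inv_div]
    have hk0 : δ ^ (k:ℝ) ≠ 0 := ne_of_gt (Real.rpow_pos_of_pos hδ0 _)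
    have hkey : δ ^ ((k:ℝ) * R) / δ ^ (k:ℝ) = δ ^ ((k:ℝ) * (R - 1)) := by
      rw [← Real.rpow_sub hδ0]
      congr 1
      ring
    field_simp
    rw [← hkey]
    field_simp
  -- Step 4/5/6 : back to an integral and the pointwise upper layer bound
  have step4 : ∑' k : ℤ, ENNReal.ofReal (R * (δ ^ R - 1) * δ ^ ((k:ℝ) * (R - 1))) * Φ k ≤
      ENNReal.ofReal (((δ ^ R - 1) / (δ ^ (R - 1) - 1)) ^ R) *
        ∫⁻ x, (g x) ^ R * mx μ 𝒟 w x ∂μ := by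
    have h4a : ∀ k : ℤ, ENNReal.ofReal (R * (δ ^ R - 1) * δ ^ ((k:ℝ) * (R - 1))) * Φ k =
        ∫⁻ y, ENNReal.ofReal (R * (δ ^ R - 1) * δ ^ ((k:ℝ) * (R - 1))) *
          (hfun k y * mx μ 𝒟 w y) ∂μ := by
      intro k
      rw [hΦdef]
      exact (lintegral_const_mul' _ _ ENNReal.ofReal_ne_top).symm
    calc ∑' k : ℤ, ENNReal.ofReal (R * (δ ^ R - 1) * δ ^ ((k:ℝ) * (R - 1))) * Φ k
        = ∫⁻ y, ∑' k : ℤ, ENNReal.ofReal (R * (δ ^ R - 1) * δ ^ ((k:ℝ) * (R - 1))) *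
            (hfun k y * mx μ 𝒟 w y) ∂μ := by
          rw [tsum_congr h4a]
          refine (lintegral_tsum fun k => ?_).symm
          exact (((hhmeas k).mul hmxw).const_mul _).aemeasurable
      _ = ∫⁻ y, (∑' k : ℤ, ENNReal.ofReal (R * (δ ^ R - 1) * δ ^ ((k:ℝ) * (R - 1))) *
            (hfun k y)) * mx μ 𝒟 w y ∂μ := by
          refine lintegral_congr fun y => ?_
          rw [← ENNReal.tsum_mul_right]
          exact tsum_congr fun k => (mul_assoc _ _ _).symm
      _ ≤ ∫⁻ y, (ENNReal.ofReal (((δ ^ R - 1) / (δ ^ (R - 1) - 1)) ^ R) * (g y) ^ R) *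
            mx μ 𝒟 w y ∂μ := by
          refine lintegral_mono fun y => mul_le_mul_left ?_ _
          exact tsum_layer_le hδ hR (g y)
      _ = ENNReal.ofReal (((δ ^ R - 1) / (δ ^ (R - 1) - 1)) ^ R) *
            ∫⁻ x, (g x) ^ R * mx μ 𝒟 w x ∂μ := by
          rw [← lintegral_const_mul' _ _ ENNReal.ofReal_ne_top]
          exact lintegral_congr fun y => by rw [mul_assoc]
  calc ∫⁻ x, (mx μ 𝒟 g x) ^ R ∂ν
      ≤ ∑' k : ℤ, ENNReal.ofReal ((δ ^ R - 1) * δ ^ ((k:ℝ) * R)) * ν (S k) := step1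
    _ ≤ ∑' k : ℤ, ENNReal.ofReal (R * (δ ^ R - 1) * δ ^ ((k:ℝ) * (R - 1))) * Φ k := by
        refine ENNReal.tsum_le_tsum fun k => ?_
        rw [← step3 k]
        exact mul_le_mul_right (step2 k) _
    _ ≤ _ := step4

lemma core {μ : Measure α} {𝒟 : Set (Set α)} (hcount : 𝒟.Countable)
    (hmeas : ∀ Q ∈ 𝒟, MeasurableSet Q)
    (hfin : ∀ Q ∈ 𝒟, 0 < μ Q ∧ μ Q < ⊤)
    (hnest : ∀ Q ∈ 𝒟, ∀ Q' ∈ 𝒟, Disjoint Q Q' ∨ Q ⊆ Q' ∨ Q' ⊆ Q)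
    {w : α → ℝ≥0∞} (hw : Measurable w) {g : α → ℝ≥0∞} (hg : Measurable g)
    {R : ℝ} (hR : 1 < R) :
    ∫⁻ x, (mx μ 𝒟 g x) ^ R * w x ∂μ ≤
      ENNReal.ofReal ((R / (R - 1)) ^ R) * ∫⁻ x, (g x) ^ R * mx μ 𝒟 w x ∂μ := by
  have hpos : (0:ℝ) < (R / (R - 1)) ^ R :=
    Real.rpow_pos_of_pos (div_pos (by linarith) (by linarith)) _
  have htend : Tendsto (fun δ : ℝ =>
      ENNReal.ofReal (((δ ^ R - 1) / (δ ^ (R - 1) - 1)) ^ R) *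
        ∫⁻ x, (g x) ^ R * mx μ 𝒟 w x ∂μ) (𝓝[>] (1:ℝ))
      (𝓝 (ENNReal.ofReal ((R / (R - 1)) ^ R) * ∫⁻ x, (g x) ^ R * mx μ 𝒟 w x ∂μ)) :=
    ENNReal.Tendsto.mul_const
      ((ENNReal.continuous_ofReal.tendsto _).comp (tendsto_Cdelta hR))
      (Or.inl (ENNReal.ofReal_pos.2 hpos).ne')
  have hev : ∀ᶠ δ in 𝓝[>] (1:ℝ), ∫⁻ x, (mx μ 𝒟 g x) ^ R * w x ∂μ ≤
      ENNReal.ofReal (((δ ^ R - 1) / (δ ^ (R - 1) - 1)) ^ R) *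
        ∫⁻ x, (g x) ^ R * mx μ 𝒟 w x ∂μ :=
    eventually_nhdsWithin_of_forall fun δ hδ =>
      core_delta hcount hmeas hfin hnest hw hg hR hδ
  exact ge_of_tendsto htend hev


end Stmt9Aux

open Stmt9Aux

/-- For `1 ≤ q < p < ∞` and any weight `w`,
`‖ℳ_q f‖_{L^p(w)} ≤ ((p/q)')^{1/q} ‖f‖_{L^p(ℳw)}`, where `ℳ_q f = (ℳ(|f|^q))^{1/q}` and `ℳ`
is the dyadic maximal operator. -/
theorem stmt_9 {α : Type*} [MeasurableSpace α] (μ : Measure α)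
    (𝒟 : Set (Set α)) (hcount : 𝒟.Countable)
    (hmeas : ∀ Q ∈ 𝒟, MeasurableSet Q)
    (hfin : ∀ Q ∈ 𝒟, 0 < μ Q ∧ μ Q < ⊤)
    (hnest : ∀ Q ∈ 𝒟, ∀ Q' ∈ 𝒟, Disjoint Q Q' ∨ Q ⊆ Q' ∨ Q' ⊆ Q)
    (M : (α → ℝ≥0∞) → α → ℝ≥0∞)
    (hM : M = fun g x => ⨆ Q ∈ 𝒟, ⨆ (_ : x ∈ Q), (μ Q)⁻¹ * ∫⁻ y in Q, g y ∂μ)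
    (w f : α → ℝ≥0∞) (hw : Measurable w) (hf : Measurable f)
    (p q : ℝ) (hq : 1 ≤ q) (hqp : q < p) :
    (∫⁻ x, (M (fun y => f y ^ q) x) ^ (p / q) * w x ∂μ) ^ (1 / p) ≤
      ENNReal.ofReal (((p / q) / (p / q - 1)) ^ (1 / q)) *
        (∫⁻ x, f x ^ p * M w x ∂μ) ^ (1 / p) := by
  have hMx : M = mx μ 𝒟 := by rw [hM]; rfl
  subst hMx
  have hq0 : (0:ℝ) < q := lt_of_lt_of_le one_pos hq
  have hp0 : (0:ℝ) < p := lt_trans hq0 hqp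
  have hR : 1 < p / q := (one_lt_div hq0).2 hqp
  have hg : Measurable (fun y => f y ^ q) := hf.pow_const q
  have hcore := core hcount hmeas hfin hnest hw hg (R := p / q) hR
  have hFrw : (fun x => ((fun y => f y ^ q) x) ^ (p / q) * mx μ 𝒟 w x)
      = fun x => f x ^ p * mx μ 𝒟 w x := by
    funext x
    congr 1
    rw [← ENNReal.rpow_mul]
    congr 1
    field_simp
  rw [show (∫⁻ x, ((fun y => f y ^ q) x) ^ (p / q) * mx μ 𝒟 w x ∂μ)
      = ∫⁻ x, f x ^ p * mx μ 𝒟 w x ∂μ from by rw [lintegral_congr fun x => congrFun hFrw x]] at hcore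
  have hmono := ENNReal.rpow_le_rpow hcore (by positivity : (0:ℝ) ≤ 1 / p)
  rw [ENNReal.mul_rpow_of_nonneg _ _ (by positivity : (0:ℝ) ≤ 1 / p)] at hmono
  have hRpos : (0:ℝ) < (p / q) / (p / q - 1) := div_pos (by linarith) (by linarith)
  have hconst : (ENNReal.ofReal ((p / q / (p / q - 1)) ^ (p / q))) ^ (1 / p)
      = ENNReal.ofReal ((p / q / (p / q - 1)) ^ (1 / q)) := by
    rw [ENNReal.ofReal_rpow_of_pos (Real.rpow_pos_of_pos hRpos _),
      ← Real.rpow_mul hRpos.le]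
    congr 2
    field_simp
  rw [hconst] at hmono
  exact hmono
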